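/- Let H and G be real Hilbert spaces, let M : H → G be a bounded linear operator such that M M* = θ Id for some θ > 0, let D be a nonempty closed convex subset of G, let μ > 0, let φ : ℝ → ℝ be even, convex, and differentiable with a μ-Lipschitzian derivative, and set h = φ ∘ d_D ∘ M. Then h : H → ℝ is convex and Fréchet differentiable with a μ‖M‖²-Lipschitzian gradient, and for every x ∈ H the gradient of h at x equals (φ'(d_D(Mx))/d_D(Mx)) M*(Mx − proj_D(Mx)) if Mx ∉ D, and equals 0 if Mx ∈ D. -/

import Mathlib

open Set

local notation "⟪" x ", " y "⟫" => @inner ℝ _ _ x y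

lemma stmt11_tangent {φ φ' : ℝ → ℝ} (hconv : ConvexOn ℝ Set.univ φ)
    (hderiv : ∀ t, HasDerivAt φ (φ' t) t) (r t : ℝ) :
    φ r + φ' r * (t - r) ≤ φ t := by
  rcases lt_trichotomy r t with hlt | rfl | hlt
  · have hs := hconv.le_slope_of_hasDerivAt (mem_univ r) (mem_univ t) hlt (hderiv r)
    rw [slope_def_field, le_div_iff₀ (by linarith : (0:ℝ) < t - r)] at hs
    nlinarith
  · simp
  · have hs := hconv.slope_le_of_hasDerivAt (mem_univ t) (mem_univ r) hlt (hderiv r)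
    rw [slope_def_field, div_le_iff₀ (by linarith : (0:ℝ) < r - t)] at hs
    nlinarith

lemma stmt11_mono {φ φ' : ℝ → ℝ} (hconv : ConvexOn ℝ Set.univ φ)
    (hderiv : ∀ t, HasDerivAt φ (φ' t) t) : Monotone φ' := by
  intro r t hrt
  rcases eq_or_lt_of_le hrt with rfl | hlt
  · exact le_refl _
  · have h1 := stmt11_tangent hconv hderiv r t
    have h2 := stmt11_tangent hconv hderiv t r
    nlinarith

lemma stmt11_deriv_zero {φ φ' : ℝ → ℝ} (heven : ∀ t, φ (-t) = φ t)
    (hderiv : ∀ t, HasDerivAt φ (φ' t) t) : φ' 0 = 0 := by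
  have h1 : HasDerivAt (fun t => φ (-t)) (φ' (-0) * (-1)) 0 :=
    (hderiv (-0)).comp 0 (hasDerivAt_neg 0)
  have h2 : (fun t : ℝ => φ (-t)) = φ := funext heven
  rw [h2] at h1
  have := (hderiv 0).unique h1
  simp at this
  linarith

lemma stmt11_descent {φ φ' : ℝ → ℝ} {μ : ℝ} (hμ : 0 < μ)
    (hderiv : ∀ t, HasDerivAt φ (φ' t) t)
    (hlip : LipschitzWith (Real.toNNReal μ) φ') (r s : ℝ) :
    φ s ≤ φ r + φ' r * (s - r) + μ / 2 * (s - r) ^ 2 := by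
  have hlip' : ∀ a b : ℝ, |φ' a - φ' b| ≤ μ * |a - b| := by
    intro a b
    have := hlip.dist_le_mul a b
    rwa [Real.dist_eq, Real.dist_eq, Real.coe_toNNReal _ hμ.le] at this
  set ψ : ℝ → ℝ := fun t => φ r + φ' r * (t - r) + μ / 2 * (t - r) ^ 2 - φ t with hψ
  have hψd : ∀ t, HasDerivAt ψ (φ' r + μ * (t - r) - φ' t) t := by
    intro t
    have h1 : HasDerivAt (fun t : ℝ => φ r + φ' r * (t - r) + μ / 2 * (t - r) ^ 2)
        (φ' r + μ * (t - r)) t := by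
      have ha := (((hasDerivAt_id t).sub_const r).const_mul (φ' r)).const_add (φ r)
      have h2 := ((((hasDerivAt_id t).sub_const r).pow 2).const_mul (μ / 2))
      exact (ha.add h2).congr_deriv (by simp only [id_eq, mul_one, Nat.cast_ofNat, pow_one, Nat.add_one_sub_one]; ring)
    exact h1.sub (hderiv t)
  have hψc : Continuous ψ :=
    continuous_iff_continuousAt.2 fun t => (hψd t).differentiableAt.continuousAt
  have hψr : ψ r = 0 := by simp [hψ]
  have key : 0 ≤ ψ s := by
    rcases le_total r s with hrs | hrs
    · have hmono : MonotoneOn ψ (Ici r) := by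
        apply monotoneOn_of_deriv_nonneg (convex_Ici r) hψc.continuousOn
        · exact fun t ht => ((hψd t).differentiableAt.differentiableWithinAt)
        · intro t ht
          rw [interior_Ici] at ht
          rw [(hψd t).deriv]
          have h3 := hlip' t r
          rw [abs_of_nonneg (by linarith [mem_Ioi.1 ht] : (0:ℝ) ≤ t - r)] at h3
          have h4 := (abs_le.1 h3).2
          linarith
      have := hmono self_mem_Ici (mem_Ici.2 hrs) hrs
      linarith [hψr ▸ this]
    · have hanti : AntitoneOn ψ (Iic r) := by
        apply antitoneOn_of_deriv_nonpos (convex_Iic r) hψc.continuousOn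
        · exact fun t ht => ((hψd t).differentiableAt.differentiableWithinAt)
        · intro t ht
          rw [interior_Iic] at ht
          rw [(hψd t).deriv]
          have h3 := hlip' r t
          rw [abs_of_nonneg (by linarith [mem_Iio.1 ht] : (0:ℝ) ≤ r - t)] at h3
          have h4 := (abs_le.1 h3).2
          linarith
      have := hanti (mem_Iic.2 hrs) self_mem_Iic hrs
      linarith [hψr ▸ this]
  simp only [hψ] at key
  linarith



lemma stmt11_hasGradientAt {E : Type*} [NormedAddCommGroup E] [InnerProductSpace ℝ E]
    [CompleteSpace E] {f : E → ℝ} {v : E → E} {C : ℝ} (hC : 0 ≤ C)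
    (hlow : ∀ x z, f x + ⟪v x, z - x⟫ ≤ f z)
    (hup : ∀ x z, f z ≤ f x + ⟪v x, z - x⟫ + C / 2 * ‖z - x‖ ^ 2) (x : E) :
    HasGradientAt f (v x) x := by
  rw [hasGradientAt_iff_isLittleO, Asymptotics.isLittleO_iff]
  intro c hc
  have hr : 0 < 2 * c / (C + 1) := by positivity
  filter_upwards [Metric.ball_mem_nhds x hr] with z hz
  rw [Metric.mem_ball, dist_eq_norm] at hz
  have h1 := hlow x z
  have h2 := hup x z
  rw [Real.norm_eq_abs, abs_of_nonneg (by linarith)]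
  have hn : (0:ℝ) ≤ ‖z - x‖ := norm_nonneg _
  rw [lt_div_iff₀ (by positivity : (0:ℝ) < C + 1)] at hz
  have : C / 2 * ‖z - x‖ ^ 2 ≤ c * ‖z - x‖ := by
    nlinarith [mul_le_mul_of_nonneg_left hz.le hn, hn, hC, hc]
  linarith

lemma stmt11_lipschitz {E : Type*} [NormedAddCommGroup E] [InnerProductSpace ℝ E]
    {f : E → ℝ} {v : E → E} {C : ℝ} (hC : 0 < C)
    (hlow : ∀ x z, f x + ⟪v x, z - x⟫ ≤ f z)
    (hup : ∀ x z, f z ≤ f x + ⟪v x, z - x⟫ + C / 2 * ‖z - x‖ ^ 2) :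
    LipschitzWith (Real.toNNReal C) v := by
  have key : ∀ x z, 1 / (2 * C) * ‖v z - v x‖ ^ 2 ≤ f z - f x - ⟪v x, z - x⟫ := by
    intro x z
    set e := v z - v x with he
    set y' := z - (1 / C) • e with hy'
    have h1 := hup z y'
    have h2 := hlow x y'
    have hy'z : y' - z = -((1/C) • e) := by rw [hy']; abel
    have hy'x : y' - x = (z - x) - (1/C) • e := by rw [hy']; abel
    rw [hy'z, inner_neg_right, inner_smul_right, norm_neg, norm_smul, mul_pow] at h1
    rw [hy'x, inner_sub_right, inner_smul_right] at h2
    have hee : ⟪v z, e⟫ - ⟪v x, e⟫ = ‖e‖ ^ 2 := by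
      rw [← inner_sub_left, ← he, real_inner_self_eq_norm_sq]
    have hnorm : ‖(1:ℝ)/C‖ = 1/C := by
      rw [Real.norm_eq_abs, abs_of_pos (by positivity)]
    rw [hnorm] at h1
    have hq : C / 2 * ((1/C) ^ 2 * ‖e‖ ^ 2) = 1/(2*C) * ‖e‖ ^ 2 := by
      field_simp
    have hw : 1/C * ⟪v z, e⟫ - 1/C * ⟪v x, e⟫ = 1/C * ‖e‖ ^ 2 := by
      rw [← mul_sub, hee]
    have hz2 : 1/C * ‖e‖ ^ 2 - 1/(2*C) * ‖e‖ ^ 2 = 1/(2*C) * ‖e‖ ^ 2 := by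
      field_simp; ring
    rw [hq] at h1
    linarith
  have coco : ∀ x z, 1 / C * ‖v z - v x‖ ^ 2 ≤ ⟪v z - v x, z - x⟫ := by
    intro x z
    have k1 := key x z
    have k2 := key z x
    have hsym : ‖v x - v z‖ = ‖v z - v x‖ := norm_sub_rev _ _
    rw [hsym] at k2
    have hinner : ⟪v x, z - x⟫ + ⟪v z, x - z⟫ = -⟪v z - v x, z - x⟫ := by
      rw [inner_sub_left]
      have h : (x - z : E) = -(z - x) := by abel
      rw [h, inner_neg_right]
      ring
    have hsum : 1/(2*C) * ‖v z - v x‖ ^ 2 + 1/(2*C) * ‖v z - v x‖ ^ 2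
        = 1/C * ‖v z - v x‖ ^ 2 := by field_simp; ring
    linarith
  apply LipschitzWith.of_dist_le_mul
  intro z x
  rw [dist_eq_norm, dist_eq_norm, Real.coe_toNNReal _ hC.le]
  have hc := coco x z
  have hcs := real_inner_le_norm (v z - v x) (z - x)
  have hn : (0:ℝ) ≤ ‖v z - v x‖ := norm_nonneg _
  by_cases h0 : ‖v z - v x‖ = 0
  · rw [h0]; positivity
  · have hpos : 0 < ‖v z - v x‖ := lt_of_le_of_ne hn (Ne.symm h0)
    have h3 := mul_le_mul_of_nonneg_left (hc.trans hcs) hC.le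
    have h4 : C * (1/C * ‖v z - v x‖ ^ 2) = ‖v z - v x‖ ^ 2 := by field_simp
    rw [h4] at h3
    nlinarith [h3, hpos]

lemma stmt11_convexOn {E : Type*} [NormedAddCommGroup E] [InnerProductSpace ℝ E]
    {f : E → ℝ} {v : E → E}
    (hlow : ∀ x z, f x + ⟪v x, z - x⟫ ≤ f z) : ConvexOn ℝ Set.univ f := by
  refine ⟨convex_univ, fun x _ z _ a b ha hb hab => ?_⟩
  set p := a • x + b • z with hp
  have h1 := hlow p x
  have h2 := hlow p z
  have hcomb : a • (x - p) + b • (z - p) = 0 := by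
    have hs : a • (x - p) + b • (z - p) = (a • x + b • z) - (a + b) • p := by module
    rw [hs, hab, one_smul, hp, sub_self]
  have hin : a * ⟪v p, x - p⟫ + b * ⟪v p, z - p⟫ = 0 := by
    rw [← real_inner_smul_right, ← real_inner_smul_right, ← inner_add_right, hcomb,
      inner_zero_right]
  simp only [smul_eq_mul]
  have hfp : a * f p + b * f p = f p := by rw [← add_mul, hab, one_mul]
  linarith [mul_le_mul_of_nonneg_left h1 ha, mul_le_mul_of_nonneg_left h2 hb]

open Set Metric



section
variable {G : Type*} [NormedAddCommGroup G] [InnerProductSpace ℝ G]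
variable {D : Set G} {P : G → G}

lemma stmt11_proj_dist (hDne : D.Nonempty)
    (hproj : ∀ y, P y ∈ D ∧ ∀ z ∈ D, dist y (P y) ≤ dist y z) (y : G) :
    Metric.infDist y D = ‖y - P y‖ := by
  haveI : Nonempty D := hDne.to_subtype
  refine le_antisymm ?_ ?_
  · rw [← dist_eq_norm]
    exact Metric.infDist_le_dist_of_mem (hproj y).1
  · rw [Metric.infDist_eq_iInf, ← dist_eq_norm]
    exact le_ciInf fun z => (hproj y).2 z z.2

lemma stmt11_proj_self (hproj : ∀ y, P y ∈ D ∧ ∀ z ∈ D, dist y (P y) ≤ dist y z)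
    {y : G} (hy : y ∈ D) : P y = y := by
  have h := (hproj y).2 y hy
  simp only [dist_self] at h
  have := le_antisymm h dist_nonneg
  exact (dist_eq_zero.1 this).symm

lemma stmt11_obtuse (hDconv : Convex ℝ D)
    (hproj : ∀ y, P y ∈ D ∧ ∀ z ∈ D, dist y (P y) ≤ dist y z)
    (y : G) {c : G} (hc : c ∈ D) : ⟪y - P y, c - P y⟫ ≤ 0 := by
  have hiInf : ‖y - P y‖ = ⨅ w : D, ‖y - w‖ := by
    haveI : Nonempty D := ⟨⟨P y, (hproj y).1⟩⟩
    refine le_antisymm (le_ciInf fun w => ?_)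
      (ciInf_le (f := fun w : D => ‖y - w‖) ⟨0, by rintro _ ⟨w, rfl⟩; exact norm_nonneg _⟩ ⟨P y, (hproj y).1⟩)
    simpa [dist_eq_norm] using (hproj y).2 w w.2
  exact (norm_eq_iInf_iff_real_inner_le_zero hDconv (hproj y).1).1 hiInf c hc

end

section
variable {G : Type*} [NormedAddCommGroup G] [InnerProductSpace ℝ G]
variable {D : Set G} {P : G → G} {μ : ℝ} {φ φ' : ℝ → ℝ}

lemma stmt11_glower (hDne : D.Nonempty) (hDclosed : IsClosed D) (hDconv : Convex ℝ D)
    (heven : ∀ t, φ (-t) = φ t) (hconv : ConvexOn ℝ Set.univ φ)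
    (hderiv : ∀ t, HasDerivAt φ (φ' t) t)
    (hproj : ∀ y, P y ∈ D ∧ ∀ z ∈ D, dist y (P y) ≤ dist y z) (y z : G) :
    φ (infDist y D) + ⟪(φ' (infDist y D) / infDist y D) • (y - P y), z - y⟫
      ≤ φ (infDist z D) := by
  have hphi0 := stmt11_deriv_zero heven hderiv
  have hmono := stmt11_mono hconv hderiv
  by_cases hy : y ∈ D
  · have hPy : P y = y := stmt11_proj_self hproj hy
    have hd0 : infDist y D = 0 := infDist_zero_of_mem hy
    rw [hPy, sub_self, smul_zero, inner_zero_left, hd0, add_zero]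
    have := stmt11_tangent hconv hderiv 0 (infDist z D)
    rw [hphi0] at this
    linarith
  · set r := infDist y D with hrdef
    have hr : 0 < r := (hDclosed.notMem_iff_infDist_pos hDne).1 hy
    have hra : r = ‖y - P y‖ := stmt11_proj_dist hDne hproj y
    have hphir : 0 ≤ φ' r := by
      have := hmono hr.le
      rwa [hphi0] at this
    set c := φ' r / r with hcdef
    have hc0 : 0 ≤ c := div_nonneg hphir hr.le
    have hcr : c * r = φ' r := by rw [hcdef, div_mul_cancel₀ _ hr.ne']
    -- key subgradient inequality for the distance function
    have hdz : infDist z D = ‖z - P z‖ := stmt11_proj_dist hDne hproj z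
    have hkey : r * r + ⟪y - P y, z - y⟫ ≤ r * infDist z D := by
      have hdec : (z - P z : G) = (z - y) + (y - P y) + (P y - P z) := by abel
      have hcs : ⟪y - P y, z - P z⟫ ≤ ‖y - P y‖ * ‖z - P z‖ :=
        real_inner_le_norm _ _
      have hdec2 : ⟪y - P y, z - P z⟫
          = ⟪y - P y, z - y⟫ + ⟪y - P y, y - P y⟫ + ⟪y - P y, P y - P z⟫ := by
        conv_lhs => rw [hdec]
        rw [inner_add_right, inner_add_right]
      have hself : ⟪y - P y, y - P y⟫ = r * r := by
        rw [real_inner_self_eq_norm_mul_norm, ← hra]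
      have hob : 0 ≤ ⟪y - P y, P y - P z⟫ := by
        have := stmt11_obtuse hDconv hproj y (hproj z).1
        have hneg : (P y - P z : G) = -(P z - P y) := by abel
        rw [hneg, inner_neg_right]
        linarith
      rw [← hra, ← hdz] at hcs
      linarith [hob, hself, hdec2, hcs]
    have htan := stmt11_tangent hconv hderiv r (infDist z D)
    rw [inner_smul_left, RCLike.conj_to_real]
    have hmul := mul_le_mul_of_nonneg_left
      (by linarith [hkey] : ⟪y - P y, z - y⟫ ≤ r * infDist z D - r * r) hc0
    have hcr2 : c * (r * infDist z D - r * r) = φ' r * (infDist z D - r) := by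
      rw [← hcr]; ring
    linarith [hmul, htan, hcr2]

lemma stmt11_gupper (hDne : D.Nonempty) (hDclosed : IsClosed D) (hDconv : Convex ℝ D)
    (hμ : 0 < μ)
    (heven : ∀ t, φ (-t) = φ t) (hconv : ConvexOn ℝ Set.univ φ)
    (hderiv : ∀ t, HasDerivAt φ (φ' t) t)
    (hlip : LipschitzWith (Real.toNNReal μ) φ')
    (hproj : ∀ y, P y ∈ D ∧ ∀ z ∈ D, dist y (P y) ≤ dist y z) (y z : G) :
    φ (infDist z D) ≤ φ (infDist y D)
      + ⟪(φ' (infDist y D) / infDist y D) • (y - P y), z - y⟫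
      + μ / 2 * ‖z - y‖ ^ 2 := by
  have hphi0 := stmt11_deriv_zero heven hderiv
  have hmono := stmt11_mono hconv hderiv
  have hlip' : ∀ a b : ℝ, |φ' a - φ' b| ≤ μ * |a - b| := by
    intro a b
    have := hlip.dist_le_mul a b
    rwa [Real.dist_eq, Real.dist_eq, Real.coe_toNNReal _ hμ.le] at this
  by_cases hy : y ∈ D
  · have hPy : P y = y := stmt11_proj_self hproj hy
    have hd0 : infDist y D = 0 := infDist_zero_of_mem hy
    rw [hPy, sub_self, smul_zero, inner_zero_left, hd0, add_zero]
    have hdes := stmt11_descent hμ hderiv hlip 0 (infDist z D)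
    rw [hphi0] at hdes
    have hdzy : infDist z D ≤ ‖z - y‖ := by
      rw [← dist_eq_norm]
      exact infDist_le_dist_of_mem hy
    have hdz0 : 0 ≤ infDist z D := infDist_nonneg
    have hsq2 : infDist z D ^ 2 ≤ ‖z - y‖ ^ 2 := by nlinarith
    have hmm := mul_nonneg hμ.le (sub_nonneg.2 hsq2)
    nlinarith [hdes, hmm]
  · set r := infDist y D with hrdef
    have hr : 0 < r := (hDclosed.notMem_iff_infDist_pos hDne).1 hy
    have hra : r = ‖y - P y‖ := stmt11_proj_dist hDne hproj y
    have hphir : 0 ≤ φ' r := by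
      have := hmono hr.le
      rwa [hphi0] at this
    set c := φ' r / r with hcdef
    have hc0 : 0 ≤ c := div_nonneg hphir hr.le
    have hcr : c * r = φ' r := by rw [hcdef, div_mul_cancel₀ _ hr.ne']
    have hcμ : c ≤ μ := by
      rw [hcdef, div_le_iff₀ hr]
      have := hlip' r 0
      rw [hphi0, sub_zero, sub_zero, abs_of_pos hr] at this
      calc φ' r ≤ |φ' r| := le_abs_self _
        _ ≤ μ * r := this
    set s := ‖z - P y‖ with hsdef
    set w := z - y with hwdef
    have hzPy : (z - P y : G) = w + (y - P y) := by rw [hwdef]; abel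
    have hsq : s ^ 2 = ‖w‖ ^ 2 + 2 * ⟪w, y - P y⟫ + r ^ 2 := by
      rw [hsdef, hzPy, hra, norm_add_sq_real]
    have hdzs : infDist z D ≤ s := by
      rw [hsdef, ← dist_eq_norm]
      exact infDist_le_dist_of_mem (hproj y).1
    have hs0 : 0 ≤ s := norm_nonneg _
    have hdz0 : 0 ≤ infDist z D := infDist_nonneg
    -- monotonicity of φ on nonnegative reals
    have hstep1 : φ (infDist z D) ≤ φ s := by
      have htan := stmt11_tangent hconv hderiv (infDist z D) s
      have : 0 ≤ φ' (infDist z D) := by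
        have := hmono hdz0
        rwa [hphi0] at this
      nlinarith
    have hdes := stmt11_descent hμ hderiv hlip r s
    have habs : (s - r) ^ 2 ≤ ‖w‖ ^ 2 := by
      have h1 : |s - r| ≤ ‖w‖ := by
        rw [hsdef, hra, hzPy]
        have := abs_norm_sub_norm_le (w + (y - P y)) (y - P y)
        simpa using this
      have h2 := abs_le.1 h1
      nlinarith [h2.1, h2.2]
    rw [inner_smul_left, RCLike.conj_to_real, real_inner_comm]
    have hprod : 0 ≤ (μ - c) * (‖w‖ ^ 2 - (s - r) ^ 2) :=
      mul_nonneg (by linarith) (by linarith)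
    nlinarith [hstep1, hdes, hsq, hprod, hcr]

end

/-- Let `H`, `G` be real Hilbert spaces, `M : H → G` bounded linear with
`M M* = θ Id` for some `θ > 0`, `D` nonempty closed convex in `G`, `μ > 0`, `φ : ℝ → ℝ`
even convex differentiable with `μ`-Lipschitzian derivative, and `h = φ ∘ d_D ∘ M`.
Then `h` is convex and Fréchet differentiable with a `μ‖M‖²`-Lipschitzian gradient, and
the gradient at `x` is `(φ'(d_D(Mx))/d_D(Mx)) • M*(Mx − proj_D(Mx))` if `Mx ∉ D`, and `0`
if `Mx ∈ D`. -/
theorem stmt_11 {H : Type*} [NormedAddCommGroup H] [InnerProductSpace ℝ H] [CompleteSpace H]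
    {G : Type*} [NormedAddCommGroup G] [InnerProductSpace ℝ G] [CompleteSpace G]
    (M : H →L[ℝ] G) (θ : ℝ) (hθ : 0 < θ)
    (hM : M.comp (ContinuousLinearMap.adjoint M) = θ • ContinuousLinearMap.id ℝ G)
    (D : Set G) (hDne : D.Nonempty) (hDclosed : IsClosed D) (hDconv : Convex ℝ D)
    (μ : ℝ) (hμ : 0 < μ)
    (φ : ℝ → ℝ) (heven : ∀ t, φ (-t) = φ t) (hconv : ConvexOn ℝ Set.univ φ)
    (φ' : ℝ → ℝ) (hderiv : ∀ t, HasDerivAt φ (φ' t) t)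
    (hlip : LipschitzWith (Real.toNNReal μ) φ')
    (h : H → ℝ) (hdef : ∀ x, h x = φ (Metric.infDist (M x) D))
    (projD : G → G)
    (hproj : ∀ y, projD y ∈ D ∧ ∀ z ∈ D, dist y (projD y) ≤ dist y z) :
    ConvexOn ℝ Set.univ h ∧
    (∀ x, DifferentiableAt ℝ h x) ∧
    LipschitzWith (Real.toNNReal (μ * ‖M‖ ^ 2)) (fun x => gradient h x) ∧
    (∀ x : H,
      (M x ∉ D → HasGradientAt h
        ((φ' (Metric.infDist (M x) D) / Metric.infDist (M x) D) •
          ContinuousLinearMap.adjoint M (M x - projD (M x))) x) ∧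
      (M x ∈ D → HasGradientAt h 0 x)) := by
  classical
  set A := ContinuousLinearMap.adjoint M with hA
  set v : G → G :=
    fun y => (φ' (Metric.infDist y D) / Metric.infDist y D) • (y - projD y) with hv
  set vh : H → H := fun x => A (v (M x)) with hvh
  have hadj : ∀ (g : G) (w : H), ⟪A g, w⟫ = ⟪g, M w⟫ :=
    fun g w => ContinuousLinearMap.adjoint_inner_left M w g
  have hlowG := stmt11_glower hDne hDclosed hDconv heven hconv hderiv hproj
  have hupG := stmt11_gupper hDne hDclosed hDconv hμ heven hconv hderiv hlip hproj
  have hinnervh : ∀ x z : H, ⟪vh x, z - x⟫ = ⟪v (M x), M z - M x⟫ := by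
    intro x z
    rw [hvh, hadj, map_sub]
  have hlowH : ∀ x z : H, h x + ⟪vh x, z - x⟫ ≤ h z := by
    intro x z
    rw [hdef, hdef, hinnervh]
    exact hlowG (M x) (M z)
  have hC : 0 ≤ μ * ‖M‖ ^ 2 := by positivity
  have hupH : ∀ x z : H, h z ≤ h x + ⟪vh x, z - x⟫ + (μ * ‖M‖ ^ 2) / 2 * ‖z - x‖ ^ 2 := by
    intro x z
    rw [hdef, hdef, hinnervh]
    have h1 := hupG (M x) (M z)
    have h2 : ‖M z - M x‖ ^ 2 ≤ ‖M‖ ^ 2 * ‖z - x‖ ^ 2 := by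
      rw [← map_sub]
      have h3 := M.le_opNorm (z - x)
      nlinarith [norm_nonneg (M (z - x)), norm_nonneg (z - x), M.opNorm_nonneg]
    have h4 := mul_le_mul_of_nonneg_left h2 (by positivity : (0:ℝ) ≤ μ / 2)
    calc φ (Metric.infDist (M z) D)
        ≤ φ (Metric.infDist (M x) D) + ⟪v (M x), M z - M x⟫ + μ / 2 * ‖M z - M x‖ ^ 2 := h1
      _ ≤ φ (Metric.infDist (M x) D) + ⟪v (M x), M z - M x⟫
            + μ * ‖M‖ ^ 2 / 2 * ‖z - x‖ ^ 2 := by nlinarith [h4]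
  have hgrad : ∀ x, HasGradientAt h (vh x) x := stmt11_hasGradientAt hC hlowH hupH
  refine ⟨stmt11_convexOn hlowH, fun x => (hgrad x).differentiableAt, ?_, ?_⟩
  · have hgradeq : (fun x => gradient h x) = vh := funext fun x => (hgrad x).gradient
    rw [hgradeq]
    by_cases hM0 : M = 0
    · have hA0 : A = 0 := by
        rw [hA, hM0]
        exact map_zero (ContinuousLinearMap.adjoint)
      have hvh0 : vh = fun _ => (0 : H) := by
        funext x
        rw [hvh, hA0]
        rfl
      rw [hvh0]
      apply LipschitzWith.of_dist_le_mul
      intro a b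
      simp only [dist_self]
      positivity
    · have hMpos : 0 < ‖M‖ := norm_pos_iff.2 hM0
      exact stmt11_lipschitz (by positivity) hlowH hupH
  · intro x
    constructor
    · intro _
      have hkey : (φ' (Metric.infDist (M x) D) / Metric.infDist (M x) D) •
          ContinuousLinearMap.adjoint M (M x - projD (M x)) = vh x := by
        simp only [hvh, hv, hA, map_smul]
      rw [hkey]
      exact hgrad x
    · intro hxD
      have hP : projD (M x) = M x := stmt11_proj_self hproj hxD
      have hvx : vh x = 0 := by
        simp [hvh, hv, hP]
      rw [← hvx]
      exact hgrad x
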